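/- Let 0 < p ≤ 1, n ∈ ℕ, and let X be a real n-dimensional p-Banach space. Then for all k ∈ ℕ, e_k(id : X → X) ≤ 4^{1/p} · 2^{-(k-1)/n}. -/

import Mathlib

/-- The `k`-th dyadic entropy number of the identity on `X`, whose unit ball is given by the
norm function `N`: the infimum of `r > 0` such that the unit ball can be covered by
`2^(k-1)` translates of `r` times the unit ball. -/
noncomputable def entropyNumberId {X : Type*} [AddCommGroup X] [Module ℝ X]
    (N : X → ℝ) (k : ℕ) : ℝ :=
  sInf {r : ℝ | 0 < r ∧ ∃ S : Finset X, S.card ≤ 2 ^ (k - 1) ∧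
    ∀ x : X, N x ≤ 1 → ∃ y ∈ S, N (x - y) ≤ r}

open MeasureTheory Pointwise
open scoped ENNReal NNReal

lemma key_cover (n : ℕ) (hn : 0 < n) (p : ℝ) (hp0 : 0 < p)
    (N : (Fin n → ℝ) → ℝ)
    (hnn : ∀ x, 0 ≤ N x) (h0 : ∀ x, N x = 0 ↔ x = 0)
    (hhom : ∀ (a : ℝ) (x : Fin n → ℝ), N (a • x) = |a| * N x)
    (htri : ∀ x y, N (x + y) ^ p ≤ N x ^ p + N y ^ p)
    (ρ τ : ℝ) (hρ : 0 < ρ) (hτ : 0 < τ) (hττ : 2 * τ ^ p ≤ ρ ^ p) :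
    ∃ S : Finset (Fin n → ℝ), (S.card : ℝ) ≤ ((1 + τ ^ p) ^ (1/p) / τ) ^ n ∧
      ∀ x, N x ≤ 1 → ∃ y ∈ S, N (x - y) ≤ ρ := by
  have hN0 : N 0 = 0 := (h0 0).mpr rfl
  have hneg : ∀ x, N (-x) = N x := fun x => by
    have := hhom (-1) x; simpa using this
  have hqp : (0:ℝ) < 1/p := by positivity
  -- iterated triangle inequality
  have hsum : ∀ (s : Finset (Fin n)) (f : Fin n → (Fin n → ℝ)),
      N (∑ i ∈ s, f i) ^ p ≤ ∑ i ∈ s, N (f i) ^ p := by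
    intro s f
    induction s using Finset.induction with
    | empty => simp [hN0, Real.zero_rpow hp0.ne']
    | insert _ _ h ih =>
      rw [Finset.sum_insert h, Finset.sum_insert h]
      exact (htri _ _).trans (by linarith)
  -- upper comparison with sup norm
  set C : ℝ := ∑ i : Fin n, N (Pi.single i 1) ^ p with hC
  have hC0 : 0 ≤ C := Finset.sum_nonneg fun i _ => Real.rpow_nonneg (hnn _) _
  set D : ℝ := (C + 1) ^ (1/p) with hD
  have hD0 : 0 < D := Real.rpow_pos_of_pos (by linarith) _
  have hDp : D ^ p = C + 1 := by
    rw [hD, ← Real.rpow_mul (by linarith), one_div_mul_cancel hp0.ne', Real.rpow_one]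
  have hub : ∀ x, N x ≤ D * ‖x‖ := by
    intro x
    have hx : ∑ i : Fin n, x i • (Pi.single i 1 : Fin n → ℝ) = x := by
      ext j
      simp [Pi.single_apply, Finset.sum_apply]
    have key : N x ^ p ≤ (D * ‖x‖) ^ p := by
      calc N x ^ p = N (∑ i : Fin n, x i • (Pi.single i 1 : Fin n → ℝ)) ^ p := by rw [hx]
        _ ≤ ∑ i : Fin n, N (x i • (Pi.single i 1 : Fin n → ℝ)) ^ p := hsum _ _
        _ ≤ ∑ i : Fin n, ‖x‖ ^ p * N (Pi.single i 1 : _) ^ p := by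
            refine Finset.sum_le_sum fun i _ => ?_
            rw [hhom, Real.mul_rpow (abs_nonneg _) (hnn _)]
            have h1 : |x i| ^ p ≤ ‖x‖ ^ p := by
              refine Real.rpow_le_rpow (abs_nonneg _) ?_ hp0.le
              rw [← Real.norm_eq_abs]; exact norm_le_pi_norm x i
            exact mul_le_mul_of_nonneg_right h1 (Real.rpow_nonneg (hnn _) _)
        _ = ‖x‖ ^ p * C := by rw [← Finset.mul_sum]
        _ ≤ (C + 1) * ‖x‖ ^ p := by nlinarith [Real.rpow_nonneg (norm_nonneg x) p]
        _ = (D * ‖x‖) ^ p := by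
            rw [Real.mul_rpow hD0.le (norm_nonneg x), hDp]
    exact (Real.rpow_le_rpow_iff (hnn x) (by positivity) hp0).mp key
  -- continuity
  have hFdiff : ∀ x y, |N x ^ p - N y ^ p| ≤ (D * ‖x - y‖) ^ p := by
    intro x y
    have hxy : N (x - y) ^ p ≤ (D * ‖x - y‖) ^ p :=
      Real.rpow_le_rpow (hnn _) (hub _) hp0.le
    have hyx : N (y - x) = N (x - y) := by rw [← neg_sub x y, hneg]
    rw [abs_sub_le_iff]
    constructor
    · have := htri (x - y) y; rw [sub_add_cancel] at this; linarith
    · have := htri (y - x) x; rw [sub_add_cancel] at this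
      rw [hyx] at this; linarith
  have hcont : Continuous N := by
    have hcF : Continuous fun x => N x ^ p := by
      rw [continuous_iff_continuousAt]
      intro x₀
      rw [ContinuousAt, tendsto_iff_dist_tendsto_zero]
      have h1 : Filter.Tendsto (fun x : Fin n → ℝ => D * ‖x - x₀‖) (nhds x₀) (nhds 0) := by
        have hc : Continuous fun x : Fin n → ℝ => D * ‖x - x₀‖ := by continuity
        have := hc.tendsto x₀
        simpa using this
      have h2 : ContinuousAt (fun t : ℝ => t ^ p) 0 :=
        Real.continuousAt_rpow_const 0 p (Or.inr hp0.le)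
      have hg : Filter.Tendsto (fun x : Fin n → ℝ => (D * ‖x - x₀‖) ^ p) (nhds x₀) (nhds 0) := by
        have := h2.tendsto.comp h1
        simpa [Real.zero_rpow hp0.ne', Function.comp_def] using this
      refine squeeze_zero (fun x => dist_nonneg) (fun x => ?_) hg
      rw [Real.dist_eq]; exact hFdiff x x₀
    have hout : Continuous fun t : ℝ => t ^ (1/p) := by
      rw [continuous_iff_continuousAt]
      intro t
      exact Real.continuousAt_rpow_const t (1/p) (Or.inr hqp.le)
    have heq : N = fun x => (N x ^ p) ^ (1/p) := by
      funext x
      rw [← Real.rpow_mul (hnn x), mul_one_div_cancel hp0.ne', Real.rpow_one]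
    rw [heq]; exact hout.comp hcF
  -- lower bound
  haveI : Nonempty (Fin n) := ⟨⟨0, hn⟩⟩
  have hsphne : ((fun _ => 1 : Fin n → ℝ)) ∈ Metric.sphere (0 : Fin n → ℝ) 1 := by
    simp [mem_sphere_iff_norm]
  obtain ⟨z₀, hz₀, hmin⟩ := (isCompact_sphere (0 : Fin n → ℝ) 1).exists_isMinOn
    ⟨_, hsphne⟩ hcont.continuousOn
  have hz₀norm : ‖z₀‖ = 1 := by simpa [mem_sphere_iff_norm] using hz₀
  set c : ℝ := N z₀ with hc
  have hc0 : 0 < c := by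
    rcases (hnn z₀).lt_or_eq with h | h
    · exact h
    · exfalso
      have : z₀ = 0 := (h0 z₀).mp h.symm
      rw [this] at hz₀norm; simp at hz₀norm
  have hlb : ∀ x, c * ‖x‖ ≤ N x := by
    intro x
    rcases eq_or_ne x 0 with rfl | hx
    · simp [hN0]
    · have hxn : (0:ℝ) < ‖x‖ := norm_pos_iff.mpr hx
      have hu : (‖x‖⁻¹ • x) ∈ Metric.sphere (0 : Fin n → ℝ) 1 := by
        simp [mem_sphere_iff_norm, norm_smul, abs_of_pos (inv_pos.mpr hxn),
          inv_mul_cancel₀ hxn.ne']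
      have hm : c ≤ N (‖x‖⁻¹ • x) := hmin hu
      rw [hhom, abs_of_pos (inv_pos.mpr hxn)] at hm
      rw [mul_comm]
      exact (le_inv_mul_iff₀ hxn).mp hm
  -- the unit ball and its measure
  set B : Set (Fin n → ℝ) := {x | N x ≤ 1} with hB
  have hBclosed : IsClosed B := isClosed_le hcont continuous_const
  have hBsub : B ⊆ Metric.closedBall 0 c⁻¹ := by
    intro x hx
    rw [Metric.mem_closedBall, dist_zero_right]
    have h1 : c * ‖x‖ ≤ 1 := (hlb x).trans hx
    rw [inv_eq_one_div, le_div_iff₀ hc0]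
    linarith
  have hBfin : volume B < ⊤ :=
    lt_of_le_of_lt (measure_mono hBsub) (isCompact_closedBall _ _).measure_lt_top
  have hBpos : 0 < volume B := by
    have hsub2 : Metric.ball 0 D⁻¹ ⊆ B := by
      intro x hx
      rw [Metric.mem_ball, dist_zero_right] at hx
      show N x ≤ 1
      calc N x ≤ D * ‖x‖ := hub x
        _ ≤ D * D⁻¹ := mul_le_mul_of_nonneg_left hx.le hD0.le
        _ = 1 := mul_inv_cancel₀ hD0.ne'
    exact lt_of_lt_of_le (Metric.measure_ball_pos _ _ (inv_pos.mpr hD0)) (measure_mono hsub2)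
  -- measure of translated dilated balls
  have hball : ∀ (a : Fin n → ℝ) (r : ℝ), 0 < r →
      volume {x | N (x - a) ≤ r} = ENNReal.ofReal (r ^ n) * volume B := by
    intro a r hr
    have h1 : {x | N (x - a) ≤ r} = a +ᵥ (r • B) := by
      ext x
      rw [Set.mem_vadd_set_iff_neg_vadd_mem, Set.mem_smul_set_iff_inv_smul_mem₀ hr.ne']
      have h2 : (-a) +ᵥ x = x - a := by
        rw [vadd_eq_add, neg_add_eq_sub]
      rw [h2]
      show N (x - a) ≤ r ↔ N (r⁻¹ • (x - a)) ≤ 1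
      rw [hhom, abs_of_pos (inv_pos.mpr hr), inv_mul_le_iff₀ hr, mul_one]
    rw [h1, measure_vadd, Measure.addHaar_smul]
    have hfr : Module.finrank ℝ (Fin n → ℝ) = n := by
      rw [Module.finrank_pi]; simp
    rw [hfr, abs_of_pos (pow_pos hr n)]
  -- packing bound
  set R₁ : ℝ := (1 + τ ^ p) ^ (1/p) with hR₁
  have hτp0 : (0:ℝ) < τ ^ p := Real.rpow_pos_of_pos hτ _
  have hR₁0 : 0 < R₁ := Real.rpow_pos_of_pos (by linarith) _
  have hR₁p : R₁ ^ p = 1 + τ ^ p := by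
    rw [hR₁, ← Real.rpow_mul (by linarith), one_div_mul_cancel hp0.ne', Real.rpow_one]
  have hpack : ∀ T : Finset (Fin n → ℝ), (↑T ⊆ B) →
      (∀ a ∈ T, ∀ b ∈ T, a ≠ b → ρ < N (a - b)) → (T.card : ℝ) ≤ (R₁ / τ) ^ n := by
    intro T hTB hTsep
    set g : (Fin n → ℝ) → Set (Fin n → ℝ) := fun a => {x | N (x - a) ≤ τ} with hg
    have hgm : ∀ a, MeasurableSet (g a) := by
      intro a
      exact (isClosed_le (hcont.comp (continuous_id.sub continuous_const))
        continuous_const).measurableSet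
    have hdisj : (↑T : Set (Fin n → ℝ)).PairwiseDisjoint g := by
      intro a ha b hb hab
      rw [Function.onFun, Set.disjoint_left]
      intro x hxa hxb
      have h1 : N (x - a) ≤ τ := hxa
      have h2 : N (x - b) ≤ τ := hxb
      have h3 : N (a - b) ^ p ≤ N (a - x) ^ p + N (x - b) ^ p := by
        have := htri (a - x) (x - b); rwa [sub_add_sub_cancel] at this
      have hax : N (a - x) = N (x - a) := by rw [← neg_sub x a, hneg]
      have h4 : N (x - a) ^ p ≤ τ ^ p := Real.rpow_le_rpow (hnn _) h1 hp0.le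
      have h5 : N (x - b) ^ p ≤ τ ^ p := Real.rpow_le_rpow (hnn _) h2 hp0.le
      have h6 : ρ ^ p < N (a - b) ^ p :=
        Real.rpow_lt_rpow hρ.le (hTsep a ha b hb hab) hp0
      rw [hax] at h3
      linarith
    have hsub : (⋃ a ∈ T, g a) ⊆ {x | N (x - 0) ≤ R₁} := by
      intro x hx
      rcases Set.mem_iUnion₂.mp hx with ⟨a, haT, hxa⟩
      have hha : N a ≤ 1 := hTB haT
      have h1 : N x ^ p ≤ N (x - a) ^ p + N a ^ p := by
        have := htri (x - a) a; rwa [sub_add_cancel] at this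
      have h2 : N (x - a) ^ p ≤ τ ^ p := Real.rpow_le_rpow (hnn _) hxa hp0.le
      have h3 : N a ^ p ≤ 1 := Real.rpow_le_one (hnn _) hha hp0.le
      have h4 : N x ^ p ≤ R₁ ^ p := by rw [hR₁p]; linarith
      have h5 : N x ≤ R₁ := (Real.rpow_le_rpow_iff (hnn x) hR₁0.le hp0).mp h4
      show N (x - 0) ≤ R₁
      rwa [sub_zero]
    have hcount : (T.card : ℝ≥0∞) * (ENNReal.ofReal (τ ^ n) * volume B)
        ≤ ENNReal.ofReal (R₁ ^ n) * volume B := by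
      calc (T.card : ℝ≥0∞) * (ENNReal.ofReal (τ ^ n) * volume B)
          = ∑ _a ∈ T, (ENNReal.ofReal (τ ^ n) * volume B) := by
            rw [Finset.sum_const, nsmul_eq_mul]
        _ = ∑ a ∈ T, volume (g a) := by
            exact (Finset.sum_congr rfl fun a _ => (hball a τ hτ).symm)
        _ = volume (⋃ a ∈ T, g a) := (measure_biUnion_finset hdisj (fun a _ => hgm a)).symm
        _ ≤ volume {x | N (x - 0) ≤ R₁} := measure_mono hsub
        _ = _ := hball 0 R₁ hR₁0
    have hcanc : (T.card : ℝ≥0∞) * ENNReal.ofReal (τ ^ n) ≤ ENNReal.ofReal (R₁ ^ n) := by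
      rw [← mul_assoc] at hcount
      exact (ENNReal.mul_le_mul_iff_left hBpos.ne' hBfin.ne).mp hcount
    have h7 : ENNReal.ofReal ((T.card : ℝ) * τ ^ n) ≤ ENNReal.ofReal (R₁ ^ n) := by
      rw [ENNReal.ofReal_mul (by positivity), ENNReal.ofReal_natCast]
      exact hcanc
    have h8 : (T.card : ℝ) * τ ^ n ≤ R₁ ^ n :=
      (ENNReal.ofReal_le_ofReal_iff (by positivity)).mp h7
    rw [div_pow, le_div_iff₀ (by positivity)]
    exact h8
  -- a maximal separated set
  set 𝒞 : Set ℕ := {m | ∃ T : Finset (Fin n → ℝ), ↑T ⊆ B ∧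
      (∀ a ∈ T, ∀ b ∈ T, a ≠ b → ρ < N (a - b)) ∧ T.card = m} with h𝒞
  have h𝒞ne : 0 ∈ 𝒞 := ⟨∅, by simp⟩
  have h𝒞bdd : BddAbove 𝒞 := by
    refine ⟨⌊(R₁/τ) ^ n⌋₊, fun m hm => ?_⟩
    obtain ⟨T, hTB, hTs, hTc⟩ := hm
    exact hTc ▸ Nat.le_floor (hpack T hTB hTs)
  obtain ⟨T, hTB, hTsep, hTcard⟩ := Nat.sSup_mem ⟨0, h𝒞ne⟩ h𝒞bdd
  refine ⟨T, hpack T hTB hTsep, ?_⟩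
  intro x hx
  by_contra hcon
  push_neg at hcon
  have hcon' : ∀ y ∈ T, ρ < N (x - y) := hcon
  have hxT : x ∉ T := by
    intro hxT
    have := hcon' x hxT
    rw [sub_self, hN0] at this
    exact absurd this (not_lt.mpr hρ.le)
  have hmem : T.card + 1 ∈ 𝒞 := by
    refine ⟨insert x T, ?_, ?_, ?_⟩
    · intro y hy
      rcases Finset.mem_coe.mp hy |> Finset.mem_insert.mp with rfl | hyT
      · exact hx
      · exact hTB hyT
    · intro a ha b hb hab
      rcases Finset.mem_insert.mp ha with rfl | haT
      · rcases Finset.mem_insert.mp hb with rfl | hbT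
        · exact absurd rfl hab
        · exact hcon' b hbT
      · rcases Finset.mem_insert.mp hb with rfl | hbT
        · have := hcon' a haT
          rwa [← neg_sub a b, hneg] at this
        · exact hTsep a haT b hbT hab
    · rw [Finset.card_insert_of_notMem hxT]
  have hle := le_csSup h𝒞bdd hmem
  omega

theorem entropy_id_upper
    {X : Type*} [AddCommGroup X] [Module ℝ X]
    (p : ℝ) (hp0 : 0 < p) (hp1 : p ≤ 1)
    (n : ℕ) (hn : 0 < n) (hdim : Module.finrank ℝ X = n)
    (N : X → ℝ)
    -- `N` is a p-norm on `X`
    (hnn : ∀ x, 0 ≤ N x)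
    (h0 : ∀ x, N x = 0 ↔ x = 0)
    (hhom : ∀ (a : ℝ) (x : X), N (a • x) = |a| * N x)
    (htri : ∀ x y : X, N (x + y) ^ p ≤ N x ^ p + N y ^ p)
    -- `X` is complete
    (hcomp : ∀ u : ℕ → X,
      (∀ ε > (0 : ℝ), ∃ M : ℕ, ∀ m ≥ M, ∀ l ≥ M, N (u m - u l) < ε) →
      ∃ x : X, ∀ ε > (0 : ℝ), ∃ M : ℕ, ∀ l ≥ M, N (u l - x) < ε)
    (k : ℕ) (hk : 1 ≤ k) :
    entropyNumberId N k ≤ 4 ^ (1 / p) * 2 ^ (-(((k : ℝ) - 1) / n)) := by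
  set t : ℝ := ((k : ℝ) - 1) / n with ht
  set R : ℝ := 4 ^ (1 / p) * 2 ^ (-t) with hR
  have hR0 : 0 < R :=
    mul_pos (Real.rpow_pos_of_pos (by norm_num) _) (Real.rpow_pos_of_pos (by norm_num) _)
  have hbdd : BddBelow {r : ℝ | 0 < r ∧ ∃ S : Finset X, S.card ≤ 2 ^ (k - 1) ∧
      ∀ x : X, N x ≤ 1 → ∃ y ∈ S, N (x - y) ≤ r} := ⟨0, fun r hr => hr.1.le⟩
  have hmem : R ∈ {r : ℝ | 0 < r ∧ ∃ S : Finset X, S.card ≤ 2 ^ (k - 1) ∧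
      ∀ x : X, N x ≤ 1 → ∃ y ∈ S, N (x - y) ≤ r} := by
    refine ⟨hR0, ?_⟩
    by_cases hR1 : 1 ≤ R
    · refine ⟨{0}, by simpa using Nat.one_le_two_pow, fun x hx => ⟨0, Finset.mem_singleton_self 0, ?_⟩⟩
      rw [sub_zero]
      exact hx.trans hR1
    · push_neg at hR1
      -- transfer the problem to `Fin n → ℝ`
      haveI : FiniteDimensional ℝ X := FiniteDimensional.of_finrank_pos (hdim ▸ hn)
      let e : X ≃ₗ[ℝ] (Fin n → ℝ) :=
        (Module.finBasis ℝ X).equivFun.trans (LinearEquiv.funCongrLeft ℝ ℝ (finCongr hdim.symm))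
      set N' : (Fin n → ℝ) → ℝ := fun v => N (e.symm v) with hN'
      set τ : ℝ := R / 2 ^ (1/p) with hτdef
      have h2p : ((2:ℝ) ^ (1/p)) ^ p = 2 := by
        rw [← Real.rpow_mul (by norm_num), one_div_mul_cancel hp0.ne', Real.rpow_one]
      have h2p0 : (0:ℝ) < (2:ℝ) ^ (1/p) := Real.rpow_pos_of_pos (by norm_num) _
      have hτ0 : 0 < τ := div_pos hR0 h2p0
      have hτp : τ ^ p = R ^ p / 2 := by
        rw [hτdef, Real.div_rpow hR0.le h2p0.le, h2p]
      obtain ⟨S', hcard, hcov⟩ := key_cover n hn p hp0 N'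
        (fun v => hnn _) (fun v => (h0 _).trans (by simp))
        (fun a v => by show N (e.symm (a • v)) = |a| * N (e.symm v); rw [_root_.map_smul]; exact hhom a _)
        (fun u v => by show N (e.symm (u + v)) ^ p ≤ _; rw [map_add]; exact htri _ _)
        R τ hR0 hτ0 (by rw [hτp]; ring_nf; exact le_refl _)
      classical
      refine ⟨S'.image e.symm, ?_, ?_⟩
      · -- cardinality bound
        refine le_trans (Finset.card_image_le) ?_
        have harith : ((1 + τ ^ p) ^ (1/p) / τ) ^ n ≤ ((2 ^ (k-1) : ℕ) : ℝ) := by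
          have hRp : R ^ p = 4 * 2 ^ (-(t*p)) := by
            rw [hR, Real.mul_rpow (by positivity) (by positivity)]
            have h4 : ((4:ℝ) ^ (1/p)) ^ p = 4 := by
              rw [← Real.rpow_mul (by norm_num), one_div_mul_cancel hp0.ne', Real.rpow_one]
            have h2t : ((2:ℝ) ^ (-t)) ^ p = 2 ^ (-(t*p)) := by
              rw [← Real.rpow_mul (by norm_num)]; ring_nf
            rw [h4, h2t]
          set s : ℝ := 2 ^ (-(t*p)) with hs
          have hs0 : 0 < s := Real.rpow_pos_of_pos (by norm_num) _
          have hs4 : 4 * s < 1 := by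
            have := Real.rpow_lt_one hR0.le hR1 hp0
            rwa [hRp] at this
          have hτps : τ ^ p = 2 * s := by rw [hτp, hRp]; ring
          have hτval : τ = (2*s) ^ (1/p) := by
            rw [← hτps, one_div]
            exact (Real.rpow_rpow_inv hτ0.le hp0.ne').symm
          have hdivs : (1 + τ ^ p) ^ (1/p) / τ = ((1+2*s)/(2*s)) ^ (1/p) := by
            rw [hτps, hτval, ← Real.div_rpow (by positivity) (by positivity)]
          have hbase : (1+2*s)/(2*s) ≤ 1/s := by
            rw [div_le_div_iff₀ (by positivity) (by positivity)]
            nlinarith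
          have h1s : (1/s : ℝ) = 2 ^ (t*p) := by
            rw [one_div, hs, Real.rpow_neg (by norm_num), inv_inv]
          have h2 : ((1/s : ℝ) ^ (1/p)) = 2 ^ t := by
            rw [h1s, ← Real.rpow_mul (by norm_num)]
            congr 1
            field_simp
          have h3 : ((2:ℝ) ^ t) ^ n = 2 ^ (t*(n:ℝ)) := by
            rw [← Real.rpow_natCast ((2:ℝ) ^ t) n, ← Real.rpow_mul (by norm_num)]
          have htn : t * (n:ℝ) = (k:ℝ) - 1 :=
            div_mul_cancel₀ _ (Nat.cast_ne_zero.mpr hn.ne')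
          have h4 : (2:ℝ) ^ ((k:ℝ)-1) = ((2 ^ (k-1) : ℕ) : ℝ) := by
            have hcast : ((k:ℝ) - 1) = ((k-1 : ℕ):ℝ) := by
              rw [Nat.cast_sub hk, Nat.cast_one]
            rw [hcast, Real.rpow_natCast]
            push_cast
            ring
          calc ((1 + τ ^ p) ^ (1/p) / τ) ^ n = (((1+2*s)/(2*s)) ^ (1/p)) ^ n := by rw [hdivs]
            _ ≤ ((1/s : ℝ) ^ (1/p)) ^ n := by
                refine pow_le_pow_left₀ (Real.rpow_nonneg (by positivity) _) ?_ n
                exact Real.rpow_le_rpow (by positivity) hbase (by positivity)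
            _ = ((2:ℝ) ^ t) ^ n := by rw [h2]
            _ = 2 ^ (t*(n:ℝ)) := h3
            _ = ((2 ^ (k-1) : ℕ) : ℝ) := by rw [htn, h4]
        have := hcard.trans harith
        exact_mod_cast this
      · intro x hx
        obtain ⟨y', hy', hle⟩ := hcov (e x) (by show N (e.symm (e x)) ≤ 1; rw [e.symm_apply_apply]; exact hx)
        refine ⟨e.symm y', Finset.mem_image_of_mem _ hy', ?_⟩
        have heq : e.symm (e x - y') = x - e.symm y' := by rw [map_sub, e.symm_apply_apply]
        have : N (e.symm (e x - y')) ≤ R := hle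
        rwa [heq] at this
  exact csInf_le hbdd hmem
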